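/- Let (X, f) be a dynamical system, where X is a compact Hausdorff uniform space and f : X → X is a continuous surjection. If f has a fixed point c such that {c} is the unique minimal subset of X (i.e., every nonempty closed f-invariant subset of X contains c, and {c} is a minimal set), then f is syndetically proximal: every pair (x, y) ∈ X × X is a syndetically proximal pair. -/

import Mathlib

open Filter Set Function

section Defs

variable {X : Type*} [UniformSpace X]

/-- A `D`-chain from `x` to `y`: a finite sequence `x = c 0, c 1, …, c n` (`n ≥ 1`)
with `c n = y` and `(f (c i), c (i+1)) ∈ D` for all `i < n`. -/
def DChain (f : X → X) (D : Set (X × X)) (x y : X) : Prop :=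
  ∃ n : ℕ, 1 ≤ n ∧ ∃ c : ℕ → X, c 0 = x ∧ c n = y ∧ ∀ i < n, (f (c i), c (i + 1)) ∈ D

/-- A `D`-chain from `x` to `y` contained in the set `S`. -/
def DChainIn (f : X → X) (D : Set (X × X)) (S : Set X) (x y : X) : Prop :=
  ∃ n : ℕ, 1 ≤ n ∧ ∃ c : ℕ → X, c 0 = x ∧ c n = y ∧ (∀ i ≤ n, c i ∈ S) ∧
    ∀ i < n, (f (c i), c (i + 1)) ∈ D

/-- The set of chain-recurrent points of `f`. -/
def CR (f : X → X) : Set X :=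
  {x | ∀ D ∈ uniformity X, DChain f D x x}

/-- The set of non-wandering points of `f`. -/
def NonWandering (f : X → X) : Set X :=
  {x | ∀ U : Set X, IsOpen U → x ∈ U → ∃ n : ℕ, 1 ≤ n ∧ (f^[n] '' U ∩ U).Nonempty}

/-- `(x i)` is a `D`-pseudo orbit on the set `A ⊆ ℕ`. -/
def PseudoOrbitOn (f : X → X) (D : Set (X × X)) (x : ℕ → X) (A : Set ℕ) : Prop :=
  ∀ i ∈ A, (f (x i), x (i + 1)) ∈ D

/-- `(x i)` is `E`-traced by `y` on the set `B ⊆ ℕ`. -/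
def TracedOn (f : X → X) (E : Set (X × X)) (x : ℕ → X) (y : X) (B : Set ℕ) : Prop :=
  ∀ i ∈ B, (f^[i] y, x i) ∈ E

/-- Topological shadowing. -/
def TopShadowing (f : X → X) : Prop :=
  ∀ E ∈ uniformity X, ∃ D ∈ uniformity X,
    ∀ x : ℕ → X, PseudoOrbitOn f D x Set.univ → ∃ y : X, TracedOn f E x y Set.univ

/-- Topological `(F, G)`-shadowing for families `F`, `G` of subsets of `ℕ`. -/
def FGShadowing (f : X → X) (F G : Set (Set ℕ)) : Prop :=
  ∀ E ∈ uniformity X, ∃ D ∈ uniformity X,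
    ∀ x : ℕ → X, (∃ A ∈ F, PseudoOrbitOn f D x A) →
      ∃ y : X, ∃ B ∈ G, TracedOn f E x y B

end Defs

/-- A set `A ⊆ ℕ` is syndetic: gaps are bounded. -/
def Syndetic (A : Set ℕ) : Prop :=
  ∃ M : ℕ, ∀ k : ℕ, ∃ j ∈ A, k ≤ j ∧ j ≤ k + M

/-- A set `A ⊆ ℕ` is thick: contains arbitrarily long blocks of consecutive numbers. -/
def Thick (A : Set ℕ) : Prop :=
  ∀ n : ℕ, ∃ k : ℕ, ∀ i < n, k + i ∈ A

/-- A set `A ⊆ ℕ` is thickly syndetic. -/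
def ThicklySyndetic (A : Set ℕ) : Prop :=
  ∀ n : ℕ, Syndetic {k : ℕ | ∀ i < n, k + i ∈ A}

/-- A set `A ⊆ ℕ` is piecewise syndetic. -/
def PiecewiseSyndetic (A : Set ℕ) : Prop :=
  ∃ T S : Set ℕ, Thick T ∧ Syndetic S ∧ A = T ∩ S

/-- The family of thick subsets of `ℕ`. -/
def thickFamily : Set (Set ℕ) := {A | Thick A}

/-- The family of piecewise syndetic subsets of `ℕ`. -/
def psFamily : Set (Set ℕ) := {A | PiecewiseSyndetic A}

open scoped Classical in
/-- The lower density of a subset of `ℕ`. -/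
noncomputable def lowerDensity (A : Set ℕ) : ℝ :=
  Filter.atTop.liminf fun n : ℕ => ((Finset.range n).filter (· ∈ A)).card / (n : ℝ)

/-- The family of subsets of `ℕ` of lower density `1`. -/
noncomputable def densityOneFamily : Set (Set ℕ) := {A | lowerDensity A = 1}

section Dyn

variable {X : Type*} [UniformSpace X]

/-- `x` is a minimal point of `f`. -/
def MinimalPt (f : X → X) (x : X) : Prop :=
  ∀ U : Set X, IsOpen U → x ∈ U → Syndetic {n : ℕ | f^[n] x ∈ U}

/-- `(x, y)` is a syndetically proximal pair for `f`. -/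
def SyndProx (f : X → X) (x y : X) : Prop :=
  ∀ E ∈ uniformity X, Syndetic {n : ℕ | (f^[n] x, f^[n] y) ∈ E}

end Dyn

lemma key_syndetic_aux {Y : Type*} [TopologicalSpace Y] [CompactSpace Y]
    (g : Y → Y) (hg : Continuous g) (c : Y)
    (hmin : ∀ K : Set Y, K.Nonempty → IsClosed K → g '' K ⊆ K → c ∈ K)
    (x : Y) (U : Set Y) (hU : IsOpen U) (hcU : c ∈ U) :
    Syndetic {n : ℕ | g^[n] x ∈ U} := by
  by_contra h
  unfold Syndetic at h
  push_neg at h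
  choose k hk using h
  have hk' : ∀ M, ∀ i ≤ M, g^[k M + i] x ∉ U := by
    intro M i hi hmem
    exact absurd (hk M (k M + i) hmem (Nat.le_add_right _ _)) (by omega)
  set u : ℕ → Y := fun M => g^[k M] x with hu
  obtain ⟨y, hy⟩ := exists_clusterPt_of_compactSpace (Filter.map u atTop)
  have horb : ∀ i : ℕ, g^[i] y ∉ U := by
    intro i hiy
    have hV : IsOpen (g^[i] ⁻¹' U) := hU.preimage (hg.iterate i)
    have hfreq : ∃ᶠ M in atTop, u M ∈ g^[i] ⁻¹' U :=
      mapClusterPt_iff_frequently.mp hy _ (hV.mem_nhds hiy)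
    obtain ⟨M, hMi, hMU⟩ := (hfreq.and_eventually (eventually_ge_atTop i)).exists
    refine hk' M i hMU ?_
    have : g^[i] (g^[k M] x) = g^[k M + i] x := by
      rw [add_comm, Function.iterate_add_apply]
    exact this ▸ hMi
  have hrange : (range fun n : ℕ => g^[n] y) ⊆ Uᶜ := by
    rintro _ ⟨n, rfl⟩; exact horb n
  have hKc : c ∈ closure (range fun n : ℕ => g^[n] y) := by
    refine hmin _ ⟨y, subset_closure ⟨0, rfl⟩⟩ isClosed_closure ?_
    refine ((image_closure_subset_closure_image hg).trans (closure_mono ?_))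
    rintro _ ⟨_, ⟨n, rfl⟩, rfl⟩
    exact ⟨n + 1, Function.iterate_succ_apply' g n y⟩
  exact (closure_minimal hrange (hU.isClosed_compl)) hKc hcU

/-- if f has a fixed point c such that {c} is the unique minimal subset of X,
then every pair is syndetically proximal. -/
theorem syndProx_of_unique_minimal_fixed_point
    {X : Type*} [UniformSpace X] [CompactSpace X] [T2Space X]
    (f : X → X) (hf : Continuous f) (hsurj : Function.Surjective f)
    (c : X) (hc : f c = c)
    (hmin : ∀ K : Set X, K.Nonempty → IsClosed K → f '' K ⊆ K → c ∈ K) :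
    ∀ x y : X, SyndProx f x y := by
  intro x y E hE
  have hcont : Continuous (Prod.map f f) := hf.prodMap hf
  have hmin2 : ∀ K : Set (X × X), K.Nonempty → IsClosed K → Prod.map f f '' K ⊆ K →
      (c, c) ∈ K := by
    intro K hne hcl hinv
    have hKcomp : IsCompact K := hcl.isCompact
    have h1 : c ∈ Prod.fst '' K := by
      refine hmin _ (hne.image _) ((hKcomp.image continuous_fst).isClosed) ?_
      rintro _ ⟨_, ⟨p, hp, rfl⟩, rfl⟩
      exact ⟨Prod.map f f p, hinv ⟨p, hp, rfl⟩, rfl⟩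
    set L : Set (X × X) := K ∩ (Prod.fst ⁻¹' {c}) with hL
    have hLne : L.Nonempty := by
      obtain ⟨p, hp, hpc⟩ := h1
      exact ⟨p, hp, hpc⟩
    have hLcl : IsClosed L := hcl.inter (isClosed_singleton.preimage continuous_fst)
    have hLinv : Prod.map f f '' L ⊆ L := by
      rintro _ ⟨p, ⟨hpK, hpc⟩, rfl⟩
      refine ⟨hinv ⟨p, hpK, rfl⟩, ?_⟩
      simp only [mem_preimage, mem_singleton_iff] at hpc ⊢
      simp [Prod.map, hpc, hc]
    have h2 : c ∈ Prod.snd '' L := by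
      refine hmin _ (hLne.image _) (((hLcl.isCompact).image continuous_snd).isClosed) ?_
      rintro _ ⟨_, ⟨p, hp, rfl⟩, rfl⟩
      exact ⟨Prod.map f f p, hLinv ⟨p, hp, rfl⟩, rfl⟩
    obtain ⟨p, ⟨hpK, hpc⟩, hpc2⟩ := h2
    simp only [mem_preimage, mem_singleton_iff] at hpc
    have : p = (c, c) := Prod.ext hpc hpc2
    exact this ▸ hpK
  have hEnhds : E ∈ nhds ((c, c) : X × X) := nhds_le_uniformity c hE
  have hcInt : (c, c) ∈ interior E := mem_interior_iff_mem_nhds.mpr hEnhds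
  have hsynd := key_syndetic_aux (Prod.map f f) hcont (c, c) hmin2 (x, y)
      (interior E) isOpen_interior hcInt
  obtain ⟨M, hM⟩ := hsynd
  refine ⟨M, fun kk => ?_⟩
  obtain ⟨j, hj, h1, h2⟩ := hM kk
  refine ⟨j, ?_, h1, h2⟩
  have : (Prod.map f f)^[j] (x, y) = (f^[j] x, f^[j] y) := by
    rw [Prod.map_iterate]; rfl
  simp only [mem_setOf_eq, this] at hj
  exact mem_setOf_eq ▸ interior_subset hj
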